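/- Let f : ℝ² → ℝ be twice continuously differentiable on an open set containing Δ = [a,b] × [c,d] (a < b, c < d), and write f₁₂ for the second-order mixed partial derivative ∂²f/∂x∂y. Then (f(a,c)+f(a,d)+f(b,c)+f(b,d))/4 + (1/((b-a)(d-c)))∫_a^b ∫_c^d f(x,y) dy dx − (1/2)[(1/(b-a))∫_a^b (f(x,c)+f(x,d)) dx + (1/(d-c))∫_c^d (f(a,y)+f(b,y)) dy] = ((b-a)(d-c)/4) ∫_0^1 ∫_0^1 (1−2λ)(1−2μ) f₁₂(λa+(1−λ)b, μc+(1−μ)d) dλ dμ. -/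

import Mathlib

set_option maxHeartbeats 1000000

open MeasureTheory intervalIntegral Set

/-- 1D integration by parts with kernel (1-2t) on [0,1]. -/
lemma ibp_kernel (φ dφ : ℝ → ℝ)
    (hd : ∀ t ∈ Set.Icc (0:ℝ) 1, HasDerivAt φ (dφ t) t)
    (hc : ContinuousOn dφ (Set.Icc 0 1)) :
    ∫ t in (0:ℝ)..1, (1 - 2*t) * dφ t
      = -(φ 0 + φ 1) + 2 * ∫ t in (0:ℝ)..1, φ t := by
  have huIcc : Set.uIcc (0:ℝ) 1 = Set.Icc 0 1 := Set.uIcc_of_le zero_le_one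
  have hφc : ContinuousOn φ (Set.Icc 0 1) := fun t ht =>
    (hd t ht).continuousAt.continuousWithinAt
  have hD : ∀ t ∈ Set.uIcc (0:ℝ) 1,
      HasDerivAt (fun t => (1 - 2*t) * φ t) (-2 * φ t + (1 - 2*t) * dφ t) t := by
    intro t ht
    rw [huIcc] at ht
    have h1 : HasDerivAt (fun t : ℝ => 1 - 2*t) (-2) t := by
      simpa using ((hasDerivAt_id t).const_mul (2:ℝ)).const_sub 1
    exact h1.mul (hd t ht)
  have hInt : IntervalIntegrable (fun t => -2 * φ t + (1 - 2*t) * dφ t) volume 0 1 := by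
    apply ContinuousOn.intervalIntegrable
    rw [huIcc]
    exact (continuousOn_const.mul hφc).add
      ((continuousOn_const.sub (continuousOn_const.mul continuousOn_id)).mul hc)
  have hFTC := integral_eq_sub_of_hasDerivAt hD hInt
  have hi1 : IntervalIntegrable (fun t => -2 * φ t) volume 0 1 := by
    apply ContinuousOn.intervalIntegrable; rw [huIcc]; exact continuousOn_const.mul hφc
  have hi2 : IntervalIntegrable (fun t => (1 - 2*t) * dφ t) volume 0 1 := by
    apply ContinuousOn.intervalIntegrable; rw [huIcc]
    exact (continuousOn_const.sub (continuousOn_const.mul continuousOn_id)).mul hc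
  rw [integral_add hi1 hi2, intervalIntegral.integral_const_mul] at hFTC
  norm_num at hFTC
  linarith [hFTC]

/-- change of variables for affine map onto [u,v] -/
lemma cov (u v : ℝ) (huv : u < v) (h : ℝ → ℝ) :
    ∫ t in (0:ℝ)..1, h (t*u + (1-t)*v) = (v-u)⁻¹ * ∫ x in u..v, h x := by
  have h1 : ∀ t : ℝ, t*u + (1-t)*v = (u-v)*t + v := fun t => by ring
  simp_rw [h1]
  rw [intervalIntegral.integral_comp_mul_add h (by intro hh; nlinarith [sub_eq_zero.mp hh] : u - v ≠ 0) v]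
  norm_num
  rw [intervalIntegral.integral_symm]
  have h2 : (u - v)⁻¹ = -(v-u)⁻¹ := by
    rw [← inv_neg, neg_sub]
  rw [h2]; ring

lemma integrable_aux (k : ℝ → ℝ → ℝ)
    (hk : ContinuousOn (fun p : ℝ × ℝ => k p.1 p.2) (Set.Icc 0 1 ×ˢ Set.Icc 0 1)) :
    Integrable (fun p : ℝ × ℝ => k p.1 p.2)
      ((volume.restrict (Set.Ioc (0:ℝ) 1)).prod (volume.restrict (Set.Ioc (0:ℝ) 1))) := by
  rw [Measure.prod_restrict, ← Measure.volume_eq_prod]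
  have h1 : IntegrableOn (fun p : ℝ × ℝ => k p.1 p.2) (Set.Icc 0 1 ×ˢ Set.Icc 0 1) volume :=
    hk.integrableOn_compact (IsCompact.prod isCompact_Icc isCompact_Icc)
  exact h1.mono_set (Set.prod_mono Set.Ioc_subset_Icc_self Set.Ioc_subset_Icc_self)

/-- Fubini swap on the unit square for continuous integrands. -/
lemma swap01 (k : ℝ → ℝ → ℝ)
    (hk : ContinuousOn (fun p : ℝ × ℝ => k p.1 p.2) (Set.Icc 0 1 ×ˢ Set.Icc 0 1)) :
    ∫ l in (0:ℝ)..1, ∫ m in (0:ℝ)..1, k l m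
      = ∫ m in (0:ℝ)..1, ∫ l in (0:ℝ)..1, k l m := by
  have h01 : (0:ℝ) ≤ 1 := zero_le_one
  rw [intervalIntegral.integral_of_le h01, intervalIntegral.integral_of_le h01]
  simp_rw [intervalIntegral.integral_of_le h01]
  exact integral_integral_swap (integrable_aux k hk)

/-- interval-integrability of a parametric integral. -/
lemma paramInt (k : ℝ → ℝ → ℝ)
    (hk : ContinuousOn (fun p : ℝ × ℝ => k p.1 p.2) (Set.Icc 0 1 ×ˢ Set.Icc 0 1)) :
    IntervalIntegrable (fun m => ∫ l in (0:ℝ)..1, k l m) volume 0 1 := by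
  rw [intervalIntegrable_iff, Set.uIoc_of_le zero_le_one]
  have := (integrable_aux k hk).integral_prod_right
  rw [IntegrableOn]
  apply this.congr
  filter_upwards with m
  rw [intervalIntegral.integral_of_le zero_le_one]

lemma integrable_aux2 (u v w z : ℝ) (k : ℝ → ℝ → ℝ)
    (hk : ContinuousOn (fun p : ℝ × ℝ => k p.1 p.2) (Set.Icc u v ×ˢ Set.Icc w z)) :
    Integrable (fun p : ℝ × ℝ => k p.1 p.2)
      ((volume.restrict (Set.Ioc u v)).prod (volume.restrict (Set.Ioc w z))) := by
  rw [Measure.prod_restrict, ← Measure.volume_eq_prod]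
  have h1 : IntegrableOn (fun p : ℝ × ℝ => k p.1 p.2) (Set.Icc u v ×ˢ Set.Icc w z) volume :=
    hk.integrableOn_compact (IsCompact.prod isCompact_Icc isCompact_Icc)
  exact h1.mono_set (Set.prod_mono Set.Ioc_subset_Icc_self Set.Ioc_subset_Icc_self)

lemma paramInt2 (u v w z : ℝ) (huv : u ≤ v) (hwz : w ≤ z) (k : ℝ → ℝ → ℝ)
    (hk : ContinuousOn (fun p : ℝ × ℝ => k p.1 p.2) (Set.Icc u v ×ˢ Set.Icc w z)) :
    IntervalIntegrable (fun x => ∫ y in w..z, k x y) volume u v := by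
  rw [intervalIntegrable_iff, Set.uIoc_of_le huv]
  have := (integrable_aux2 u v w z k hk).integral_prod_left
  rw [IntegrableOn]
  apply this.congr
  filter_upwards with x
  rw [intervalIntegral.integral_of_le hwz]

noncomputable def Gd (f : ℝ → ℝ → ℝ) : ℝ × ℝ → ℝ :=
  fun p => fderiv ℝ (fun q : ℝ × ℝ => f q.1 q.2) p (0, 1)

noncomputable def Hd (f : ℝ → ℝ → ℝ) : ℝ × ℝ → ℝ :=
  fun p => fderiv ℝ (Gd f) p (1, 0)

section derivs
variable {f : ℝ → ℝ → ℝ} {U : Set (ℝ × ℝ)} (hU : IsOpen U)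
  (hf : ContDiffOn ℝ 2 (fun p : ℝ × ℝ => f p.1 p.2) U)

include hU hf

lemma contDiffAt_G {p : ℝ × ℝ} (hp : p ∈ U) : ContDiffAt ℝ 1 (Gd f) p := by
  have h2 : ContDiffAt ℝ 2 (fun q : ℝ × ℝ => f q.1 q.2) p :=
    hf.contDiffAt (hU.mem_nhds hp)
  have h1 : ContDiffAt ℝ 1 (fderiv ℝ (fun q : ℝ × ℝ => f q.1 q.2)) p :=
    h2.fderiv_right (by norm_num)
  exact h1.clm_apply contDiffAt_const

lemma contOn_G : ContinuousOn (Gd f) U :=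
  fun p hp => ((contDiffAt_G hU hf hp).continuousAt).continuousWithinAt

lemma contOn_H : ContinuousOn (Hd f) U := by
  intro p hp
  have h0 : ContDiffAt ℝ 0 (fderiv ℝ (Gd f)) p :=
    ContDiffAt.fderiv_right (contDiffAt_G hU hf hp) (by norm_num)
  exact ((h0.clm_apply contDiffAt_const).continuousAt).continuousWithinAt

lemma hasDerivAt_y {x y : ℝ} (hp : (x, y) ∈ U) :
    HasDerivAt (fun yy => f x yy) (Gd f (x, y)) y := by
  have hdF : DifferentiableAt ℝ (fun q : ℝ × ℝ => f q.1 q.2) (x, y) :=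
    (hf.contDiffAt (hU.mem_nhds hp)).differentiableAt (by norm_num)
  exact hdF.hasFDerivAt.comp_hasDerivAt y ((hasDerivAt_const y x).prodMk (hasDerivAt_id y))

lemma hasDerivAt_Gx {x y : ℝ} (hp : (x, y) ∈ U) :
    HasDerivAt (fun xx => Gd f (xx, y)) (Hd f (x, y)) x := by
  have hdG : DifferentiableAt ℝ (Gd f) (x, y) :=
    (contDiffAt_G hU hf hp).differentiableAt one_ne_zero
  exact hdG.hasFDerivAt.comp_hasDerivAt x ((hasDerivAt_id x).prodMk (hasDerivAt_const x y))

lemma f12_eq {x y : ℝ} (hp : (x, y) ∈ U) :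
    deriv (fun xx => deriv (fun yy => f xx yy) y) x = Hd f (x, y) := by
  have hnb : (fun xx => deriv (fun yy => f xx yy) y) =ᶠ[nhds x] (fun xx => Gd f (xx, y)) := by
    have hUo : IsOpen {xx : ℝ | (xx, y) ∈ U} :=
      hU.preimage (Continuous.prodMk continuous_id continuous_const)
    filter_upwards [hUo.mem_nhds hp] with xx hxx
    exact (hasDerivAt_y hU hf hxx).deriv
  rw [hnb.deriv_eq]
  exact (hasDerivAt_Gx hU hf hp).deriv

end derivs

lemma square_identity (g Gm Hm : ℝ → ℝ → ℝ)
    (hdm : ∀ l ∈ Set.Icc (0:ℝ) 1, ∀ m ∈ Set.Icc (0:ℝ) 1,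
      HasDerivAt (fun mm => g l mm) (Gm l m) m)
    (hdl : ∀ m ∈ Set.Icc (0:ℝ) 1, ∀ l ∈ Set.Icc (0:ℝ) 1,
      HasDerivAt (fun ll => Gm ll m) (Hm l m) l)
    (hg : ContinuousOn (fun p : ℝ × ℝ => g p.1 p.2) (Set.Icc 0 1 ×ˢ Set.Icc 0 1))
    (hG : ContinuousOn (fun p : ℝ × ℝ => Gm p.1 p.2) (Set.Icc 0 1 ×ˢ Set.Icc 0 1))
    (hH : ContinuousOn (fun p : ℝ × ℝ => Hm p.1 p.2) (Set.Icc 0 1 ×ˢ Set.Icc 0 1)) :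
    ∫ l in (0:ℝ)..1, ∫ m in (0:ℝ)..1, (1 - 2*l) * (1 - 2*m) * Hm l m
      = (g 0 0 + g 0 1 + g 1 0 + g 1 1)
        - 2*((∫ m in (0:ℝ)..1, g 0 m) + (∫ m in (0:ℝ)..1, g 1 m))
        - 2*((∫ l in (0:ℝ)..1, g l 0) + (∫ l in (0:ℝ)..1, g l 1))
        + 4 * ∫ l in (0:ℝ)..1, ∫ m in (0:ℝ)..1, g l m := by
  have h01 : Set.uIcc (0:ℝ) 1 = Set.Icc 0 1 := Set.uIcc_of_le zero_le_one
  have kcont : Continuous (fun t : ℝ => 1 - 2*t) :=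
    continuous_const.sub (continuous_const.mul continuous_id)
  have slice1 : ∀ (F : ℝ × ℝ → ℝ), ContinuousOn F (Set.Icc 0 1 ×ˢ Set.Icc 0 1) →
      ∀ x ∈ Set.Icc (0:ℝ) 1, ContinuousOn (fun t => F (x, t)) (Set.Icc 0 1) := by
    intro F hF x hx
    exact hF.comp ((continuous_const.prodMk continuous_id).continuousOn)
      (fun t ht => ⟨hx, ht⟩)
  have slice2 : ∀ (F : ℝ × ℝ → ℝ), ContinuousOn F (Set.Icc 0 1 ×ˢ Set.Icc 0 1) →
      ∀ x ∈ Set.Icc (0:ℝ) 1, ContinuousOn (fun t => F (t, x)) (Set.Icc 0 1) := by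
    intro F hF x hx
    exact hF.comp ((continuous_id.prodMk continuous_const).continuousOn)
      (fun t ht => ⟨ht, hx⟩)
  -- Step 1: swap
  rw [swap01 _ (((kcont.comp continuous_fst).mul
        (kcont.comp continuous_snd)).continuousOn.mul hH)]
  -- Step 2: inner IBP in l
  have step2 : (∫ m in (0:ℝ)..1, ∫ l in (0:ℝ)..1, (1 - 2*l) * (1 - 2*m) * Hm l m)
      = ∫ m in (0:ℝ)..1,
          (1 - 2*m) * (-(Gm 0 m + Gm 1 m) + 2 * ∫ l in (0:ℝ)..1, Gm l m) := by
    apply intervalIntegral.integral_congr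
    intro m hm
    rw [h01] at hm
    have e1 : (fun l => (1 - 2*l) * (1 - 2*m) * Hm l m)
        = (fun l => (1 - 2*m) * ((1 - 2*l) * Hm l m)) := funext fun l => by ring
    show (∫ l in (0:ℝ)..1, (1 - 2*l) * (1 - 2*m) * Hm l m) = _
    rw [e1, intervalIntegral.integral_const_mul,
      ibp_kernel (fun l => Gm l m) (fun l => Hm l m)
        (fun l hl => hdl m hm l hl) (slice2 _ hH m hm)]
  rw [step2]
  -- Step 3: split the outer integral
  have iJ : IntervalIntegrable (fun m => (1 - 2*m) * ∫ l in (0:ℝ)..1, Gm l m) volume 0 1 := by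
    have e : (fun m => (1 - 2*m) * ∫ l in (0:ℝ)..1, Gm l m)
        = fun m => ∫ l in (0:ℝ)..1, (1 - 2*m) * Gm l m :=
      funext fun m => (intervalIntegral.integral_const_mul _ _).symm
    rw [e]
    exact paramInt _ (((kcont.comp continuous_snd).continuousOn).mul hG)
  have iGb : IntervalIntegrable (fun m => (1 - 2*m) * Gm 0 m) volume 0 1 := by
    apply ContinuousOn.intervalIntegrable; rw [h01]
    exact (kcont.continuousOn).mul (slice1 _ hG 0 (by norm_num))
  have iGa : IntervalIntegrable (fun m => (1 - 2*m) * Gm 1 m) volume 0 1 := by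
    apply ContinuousOn.intervalIntegrable; rw [h01]
    exact (kcont.continuousOn).mul (slice1 _ hG 1 (by norm_num))
  have e2 : (fun m => (1 - 2*m) * (-(Gm 0 m + Gm 1 m) + 2 * ∫ l in (0:ℝ)..1, Gm l m))
      = fun m => 2 * ((1 - 2*m) * ∫ l in (0:ℝ)..1, Gm l m)
          - ((1 - 2*m) * Gm 0 m + (1 - 2*m) * Gm 1 m) := funext fun m => by ring
  rw [e2, intervalIntegral.integral_sub (iJ.const_mul 2) (iGb.add iGa),
    intervalIntegral.integral_const_mul, intervalIntegral.integral_add iGb iGa]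
  -- Step 4: boundary IBPs in m
  have T0 : (∫ m in (0:ℝ)..1, (1 - 2*m) * Gm 0 m)
      = -(g 0 0 + g 0 1) + 2 * ∫ m in (0:ℝ)..1, g 0 m :=
    ibp_kernel (fun m => g 0 m) (fun m => Gm 0 m)
      (fun m hm => hdm 0 (by norm_num) m hm) (slice1 _ hG 0 (by norm_num))
  have T1 : (∫ m in (0:ℝ)..1, (1 - 2*m) * Gm 1 m)
      = -(g 1 0 + g 1 1) + 2 * ∫ m in (0:ℝ)..1, g 1 m :=
    ibp_kernel (fun m => g 1 m) (fun m => Gm 1 m)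
      (fun m hm => hdm 1 (by norm_num) m hm) (slice1 _ hG 1 (by norm_num))
  -- Step 5: the double term
  have T2 : (∫ m in (0:ℝ)..1, (1 - 2*m) * ∫ l in (0:ℝ)..1, Gm l m)
      = -((∫ l in (0:ℝ)..1, g l 0) + (∫ l in (0:ℝ)..1, g l 1))
        + 2 * ∫ l in (0:ℝ)..1, ∫ m in (0:ℝ)..1, g l m := by
    have e : (fun m => (1 - 2*m) * ∫ l in (0:ℝ)..1, Gm l m)
        = fun m => ∫ l in (0:ℝ)..1, (1 - 2*m) * Gm l m :=
      funext fun m => (intervalIntegral.integral_const_mul _ _).symm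
    rw [e, swap01 (fun m l => (1 - 2*m) * Gm l m)
      (((kcont.comp continuous_fst).continuousOn).mul
        (hG.comp (continuous_swap.continuousOn) (fun p hp => ⟨hp.2, hp.1⟩)))]
    have step : (∫ l in (0:ℝ)..1, ∫ m in (0:ℝ)..1, (1 - 2*m) * Gm l m)
        = ∫ l in (0:ℝ)..1,
            (-(g l 0 + g l 1) + 2 * ∫ m in (0:ℝ)..1, g l m) := by
      apply intervalIntegral.integral_congr
      intro l hl
      rw [h01] at hl
      exact ibp_kernel (fun m => g l m) (fun m => Gm l m)
        (fun m hm => hdm l hl m hm) (slice1 _ hG l hl)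
    rw [step]
    have ig0 : IntervalIntegrable (fun l => g l 0) volume 0 1 := by
      apply ContinuousOn.intervalIntegrable; rw [h01]
      exact slice2 _ hg 0 (by norm_num)
    have ig1 : IntervalIntegrable (fun l => g l 1) volume 0 1 := by
      apply ContinuousOn.intervalIntegrable; rw [h01]
      exact slice2 _ hg 1 (by norm_num)
    have iQ : IntervalIntegrable (fun l => ∫ m in (0:ℝ)..1, g l m) volume 0 1 :=
      paramInt (fun A B => g B A)
        (hg.comp (continuous_swap.continuousOn) (fun p hp => ⟨hp.2, hp.1⟩))
    have e3 : (fun l => -(g l 0 + g l 1) + 2 * ∫ m in (0:ℝ)..1, g l m)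
        = fun l => 2 * (∫ m in (0:ℝ)..1, g l m) - (g l 0 + g l 1) :=
      funext fun l => by ring
    rw [e3, intervalIntegral.integral_sub (iQ.const_mul 2) (ig0.add ig1),
      intervalIntegral.integral_const_mul, intervalIntegral.integral_add ig0 ig1]
    ring
  rw [T0, T1, T2]
  ring

/-- Sarikaya et al.'s identity (Lemma 1): representation of the Hadamard-type
difference via the double integral of the mixed second partial derivative. -/
theorem sarikaya_identity
    (a b c d : ℝ) (hab : a < b) (hcd : c < d)
    (f f₁₂ : ℝ → ℝ → ℝ) (U : Set (ℝ × ℝ)) (hU : IsOpen U)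
    (hsub : Set.Icc a b ×ˢ Set.Icc c d ⊆ U)
    (hf : ContDiffOn ℝ 2 (fun p : ℝ × ℝ => f p.1 p.2) U)
    (hf₁₂ : ∀ x y, f₁₂ x y = deriv (fun xx => deriv (fun yy => f xx yy) y) x) :
    (f a c + f a d + f b c + f b d) / 4
      + (1 / ((b - a) * (d - c))) * ∫ x in a..b, ∫ y in c..d, f x y
      - (1 / 2) * ((1 / (b - a)) * (∫ x in a..b, (f x c + f x d))
        + (1 / (d - c)) * (∫ y in c..d, (f a y + f b y)))
    = ((b - a) * (d - c) / 4) *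
        ∫ l in (0:ℝ)..1, ∫ m in (0:ℝ)..1,
          (1 - 2 * l) * (1 - 2 * m) *
            f₁₂ (l * a + (1 - l) * b) (m * c + (1 - m) * d) := by
  have hba : b - a ≠ 0 := sub_ne_zero.mpr hab.ne'
  have hdc : d - c ≠ 0 := sub_ne_zero.mpr hcd.ne'
  have hab' : a - b ≠ 0 := sub_ne_zero.mpr hab.ne
  have hcd' : c - d ≠ 0 := sub_ne_zero.mpr hcd.ne
  have hV : (a - b) * (c - d) ≠ 0 := mul_ne_zero hab' hcd'
  have h01 : Set.uIcc (0:ℝ) 1 = Set.Icc 0 1 := Set.uIcc_of_le zero_le_one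
  have hXm : ∀ l ∈ Set.Icc (0:ℝ) 1, l * a + (1 - l) * b ∈ Set.Icc a b := by
    intro l hl
    obtain ⟨h0, h1⟩ := hl
    constructor <;> nlinarith
  have hYm : ∀ m ∈ Set.Icc (0:ℝ) 1, m * c + (1 - m) * d ∈ Set.Icc c d := by
    intro m hm
    obtain ⟨h0, h1⟩ := hm
    constructor <;> nlinarith
  have hmemU : ∀ {x y : ℝ}, x ∈ Set.Icc a b → y ∈ Set.Icc c d → (x, y) ∈ U :=
    fun hx hy => hsub ⟨hx, hy⟩
  have hFc : ContinuousOn (fun p : ℝ × ℝ => f p.1 p.2) U := hf.continuousOn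
  have hGc : ContinuousOn (Gd f) U := contOn_G hU hf
  have hHc : ContinuousOn (Hd f) U := contOn_H hU hf
  -- the affine reparametrization, as a continuous map of the square into U
  have hXYc : Continuous (fun p : ℝ × ℝ => ((p.1 * a + (1 - p.1) * b : ℝ),
      (p.2 * c + (1 - p.2) * d : ℝ))) := by continuity
  have hXYmaps : Set.MapsTo (fun p : ℝ × ℝ => ((p.1 * a + (1 - p.1) * b : ℝ),
      (p.2 * c + (1 - p.2) * d : ℝ))) (Set.Icc 0 1 ×ˢ Set.Icc 0 1) U :=
    fun p hp => hmemU (hXm p.1 hp.1) (hYm p.2 hp.2)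
  have compCont : ∀ (F : ℝ × ℝ → ℝ), ContinuousOn F U →
      ContinuousOn (fun p : ℝ × ℝ => F (p.1 * a + (1 - p.1) * b, p.2 * c + (1 - p.2) * d))
        (Set.Icc 0 1 ×ˢ Set.Icc 0 1) :=
    fun F hF => hF.comp hXYc.continuousOn hXYmaps
  -- path derivatives
  have hXd : ∀ l : ℝ, HasDerivAt (fun ll : ℝ => ll * a + (1 - ll) * b) (a - b) l := by
    intro l
    have h := ((hasDerivAt_id l).mul_const a).add
      (((hasDerivAt_const l (1:ℝ)).sub (hasDerivAt_id l)).mul_const b)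
    have e : a - b = 1 * a + (0 - 1) * b := by ring
    rw [e]
    exact h
  have hYd : ∀ m : ℝ, HasDerivAt (fun mm : ℝ => mm * c + (1 - mm) * d) (c - d) m := by
    intro m
    have h := ((hasDerivAt_id m).mul_const c).add
      (((hasDerivAt_const m (1:ℝ)).sub (hasDerivAt_id m)).mul_const d)
    have e : c - d = 1 * c + (0 - 1) * d := by ring
    rw [e]
    exact h
  have hα : ∀ l ∈ Set.Icc (0:ℝ) 1, ∀ m ∈ Set.Icc (0:ℝ) 1,
      HasDerivAt (fun mm => f (l * a + (1 - l) * b) (mm * c + (1 - mm) * d))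
        ((c - d) * Gd f (l * a + (1 - l) * b, m * c + (1 - m) * d)) m := by
    intro l hl m hm
    have hdf := hasDerivAt_y hU hf (hmemU (hXm l hl) (hYm m hm))
    have h := hdf.comp m (hYd m)
    simpa [mul_comm, Function.comp_def] using h
  have hβ : ∀ m ∈ Set.Icc (0:ℝ) 1, ∀ l ∈ Set.Icc (0:ℝ) 1,
      HasDerivAt (fun ll => Gd f (ll * a + (1 - ll) * b, m * c + (1 - m) * d))
        ((a - b) * Hd f (l * a + (1 - l) * b, m * c + (1 - m) * d)) l := by
    intro m hm l hl
    have hp : (l * a + (1 - l) * b, m * c + (1 - m) * d) ∈ U :=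
      hmemU (hXm l hl) (hYm m hm)
    have hdG : DifferentiableAt ℝ (Gd f) (l * a + (1 - l) * b, m * c + (1 - m) * d) :=
      (contDiffAt_G hU hf hp).differentiableAt one_ne_zero
    have hpath : HasDerivAt
        (fun ll : ℝ => ((ll * a + (1 - ll) * b : ℝ), (m * c + (1 - m) * d : ℝ)))
        ((a - b, 0) : ℝ × ℝ) l :=
      (hXd l).prodMk (hasDerivAt_const l _)
    have h := hdG.hasFDerivAt.comp_hasDerivAt l hpath
    have hsm : ((a - b, (0:ℝ)) : ℝ × ℝ) = (a - b) • ((1:ℝ), (0:ℝ)) := by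
      simp
    have hval : fderiv ℝ (Gd f) (l * a + (1 - l) * b, m * c + (1 - m) * d) (a - b, 0)
        = (a - b) * Hd f (l * a + (1 - l) * b, m * c + (1 - m) * d) := by
      rw [hsm, ContinuousLinearMap.map_smul, smul_eq_mul]
      rfl
    rw [hval] at h
    exact h
  -- instantiate the square identity
  have SQ := square_identity
    (fun l m => f (l * a + (1 - l) * b) (m * c + (1 - m) * d))
    (fun l m => (c - d) * Gd f (l * a + (1 - l) * b, m * c + (1 - m) * d))
    (fun l m => (a - b) * (c - d) * Hd f (l * a + (1 - l) * b, m * c + (1 - m) * d))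
    (fun l hl m hm => hα l hl m hm)
    (by
      intro m hm l hl
      have h := (hβ m hm l hl).const_mul (c - d)
      have e : (c - d) * ((a - b) * Hd f (l * a + (1 - l) * b, m * c + (1 - m) * d))
          = (a - b) * (c - d) * Hd f (l * a + (1 - l) * b, m * c + (1 - m) * d) := by ring
      rw [e] at h
      exact h)
    (compCont _ hFc)
    (continuousOn_const.mul (compCont _ hGc))
    (continuousOn_const.mul (compCont _ hHc))
  -- rewrite the LHS of SQ in terms of the f₁₂ double integral
  have key : (∫ l in (0:ℝ)..1, ∫ m in (0:ℝ)..1, (1 - 2 * l) * (1 - 2 * m) *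
        ((a - b) * (c - d) * Hd f (l * a + (1 - l) * b, m * c + (1 - m) * d)))
      = (a - b) * (c - d) *
        ∫ l in (0:ℝ)..1, ∫ m in (0:ℝ)..1, (1 - 2 * l) * (1 - 2 * m) *
          f₁₂ (l * a + (1 - l) * b) (m * c + (1 - m) * d) := by
    rw [← intervalIntegral.integral_const_mul]
    apply intervalIntegral.integral_congr
    intro l hl
    rw [h01] at hl
    dsimp only
    rw [← intervalIntegral.integral_const_mul]
    apply intervalIntegral.integral_congr
    intro m hm
    rw [h01] at hm
    have hp : (l * a + (1 - l) * b, m * c + (1 - m) * d) ∈ U :=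
      hmemU (hXm l hl) (hYm m hm)
    have h12 : f₁₂ (l * a + (1 - l) * b) (m * c + (1 - m) * d)
        = Hd f (l * a + (1 - l) * b, m * c + (1 - m) * d) :=
      (hf₁₂ _ _).trans (f12_eq hU hf hp)
    dsimp only
    rw [h12]
    ring
  rw [key] at SQ
  -- normalize the corner points inside SQ
  have n1 : (0:ℝ) * a + (1 - 0) * b = b := by norm_num
  have n2 : (1:ℝ) * a + (1 - 1) * b = a := by norm_num
  have n3 : (0:ℝ) * c + (1 - 0) * d = d := by norm_num
  have n4 : (1:ℝ) * c + (1 - 1) * d = c := by norm_num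
  rw [n1, n2, n3, n4] at SQ
  -- change of variables for the one-dimensional integrals in the goal
  have icc_c : c ∈ Set.Icc c d := ⟨le_rfl, hcd.le⟩
  have icc_d : d ∈ Set.Icc c d := ⟨hcd.le, le_rfl⟩
  have icc_a : a ∈ Set.Icc a b := ⟨le_rfl, hab.le⟩
  have icc_b : b ∈ Set.Icc a b := ⟨hab.le, le_rfl⟩
  have intc : ∀ y₀ ∈ Set.Icc c d,
      IntervalIntegrable (fun t => f (t * a + (1 - t) * b) y₀) volume 0 1 := by
    intro y₀ hy₀
    apply ContinuousOn.intervalIntegrable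
    rw [h01]
    have hpc : Continuous (fun t : ℝ => ((t * a + (1 - t) * b : ℝ), y₀)) := by continuity
    exact hFc.comp hpc.continuousOn (fun t ht => hmemU (hXm t ht) hy₀)
  have inta : ∀ x₀ ∈ Set.Icc a b,
      IntervalIntegrable (fun t => f x₀ (t * c + (1 - t) * d)) volume 0 1 := by
    intro x₀ hx₀
    apply ContinuousOn.intervalIntegrable
    rw [h01]
    have hpc : Continuous (fun t : ℝ => ((x₀ : ℝ), (t * c + (1 - t) * d : ℝ))) := by continuity
    exact hFc.comp hpc.continuousOn (fun t ht => hmemU hx₀ (hYm t ht))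
  have hA : (∫ x in a..b, (f x c + f x d))
      = (b - a) * ((∫ t in (0:ℝ)..1, f (t * a + (1 - t) * b) c)
        + ∫ t in (0:ℝ)..1, f (t * a + (1 - t) * b) d) := by
    have h1 := cov a b hab (fun x => f x c + f x d)
    rw [intervalIntegral.integral_add (intc c icc_c) (intc d icc_d)] at h1
    rw [h1, mul_inv_cancel_left₀ hba]
  have hB : (∫ y in c..d, (f a y + f b y))
      = (d - c) * ((∫ t in (0:ℝ)..1, f a (t * c + (1 - t) * d))
        + ∫ t in (0:ℝ)..1, f b (t * c + (1 - t) * d)) := by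
    have h1 := cov c d hcd (fun y => f a y + f b y)
    rw [intervalIntegral.integral_add (inta a icc_a) (inta b icc_b)] at h1
    rw [h1, mul_inv_cancel_left₀ hdc]
  have hC : (∫ x in a..b, ∫ y in c..d, f x y)
      = (b - a) * (d - c) * ∫ l in (0:ℝ)..1, ∫ m in (0:ℝ)..1,
          f (l * a + (1 - l) * b) (m * c + (1 - m) * d) := by
    have h1 : ∀ l : ℝ, (∫ m in (0:ℝ)..1, f (l * a + (1 - l) * b) (m * c + (1 - m) * d))
        = (d - c)⁻¹ * ∫ y in c..d, f (l * a + (1 - l) * b) y :=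
      fun l => cov c d hcd (fun y => f (l * a + (1 - l) * b) y)
    simp_rw [h1]
    rw [intervalIntegral.integral_const_mul]
    have h2 := cov a b hab (fun x => ∫ y in c..d, f x y)
    rw [h2]
    field_simp
  -- finish
  set Q : ℝ := 1 / 2 * ((1 / (b - a)) * (∫ x in a..b, (f x c + f x d))
      + (1 / (d - c)) * (∫ y in c..d, (f a y + f b y))) with hQdef
  have hfx : ∀ x ∈ Set.Icc a b, IntervalIntegrable (fun y => f x y) volume c d := by
    intro x hx
    apply ContinuousOn.intervalIntegrable
    rw [Set.uIcc_of_le hcd.le]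
    have hpc : Continuous (fun y : ℝ => ((x : ℝ), (y : ℝ))) := by continuity
    exact hFc.comp hpc.continuousOn (fun y hy => hmemU hx hy)
  have hsplit : (∫ x in a..b, ∫ y in c..d, (f x y - Q))
      = (∫ x in a..b, ∫ y in c..d, f x y) - (b - a) * ((d - c) * Q) := by
    have hinner : ∀ x ∈ Set.uIcc a b,
        (∫ y in c..d, (f x y - Q)) = (∫ y in c..d, f x y) - (d - c) * Q := by
      intro x hx
      rw [Set.uIcc_of_le hab.le] at hx
      rw [intervalIntegral.integral_sub (hfx x hx) intervalIntegrable_const,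
        intervalIntegral.integral_const, smul_eq_mul]
    rw [intervalIntegral.integral_congr hinner,
      intervalIntegral.integral_sub
        (paramInt2 a b c d hab.le hcd.le f (hFc.mono hsub)) intervalIntegrable_const,
      intervalIntegral.integral_const, smul_eq_mul]
  rw [hsplit, hC, hQdef, hA, hB]
  have hJ : (∫ l in (0:ℝ)..1, ∫ m in (0:ℝ)..1, (1 - 2 * l) * (1 - 2 * m) *
        f₁₂ (l * a + (1 - l) * b) (m * c + (1 - m) * d))
      = ((a - b) * (c - d))⁻¹ *
        (((f b d + f b c + f a d + f a c)
          - 2 * ((∫ m in (0:ℝ)..1, f b (m * c + (1 - m) * d))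
            + ∫ m in (0:ℝ)..1, f a (m * c + (1 - m) * d))
          - 2 * ((∫ l in (0:ℝ)..1, f (l * a + (1 - l) * b) d)
            + ∫ l in (0:ℝ)..1, f (l * a + (1 - l) * b) c))
          + 4 * ∫ l in (0:ℝ)..1, ∫ m in (0:ℝ)..1,
              f (l * a + (1 - l) * b) (m * c + (1 - m) * d)) := by
    rw [← SQ, inv_mul_cancel_left₀ hV]
  rw [hJ]
  field_simp
  ring
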